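/- Let F be a 3-graph with at least one edge. If limsup_{n→∞} co⁺ex(n, F)/n > 0, then limsup_{n→∞} co⁺ex(n, F)/n ≥ 1/3. -/

import Mathlib

open Finset

/-- The co-degree of a vertex set `S` in the hypergraph with edge set `E`:
the number of edges containing `S`. -/
def coDeg {n : ℕ} (E : Finset (Finset (Fin n))) (S : Finset (Fin n)) : ℕ :=
  (E.filter (fun e => S ⊆ e)).card

/-- The minimum positive co-degree `δ⁺_{r-1}` of an `r`-graph on `Fin n` with edge set `E`:
the largest `k` such that every `(r-1)`-set of vertices contained in at least one edge is
contained in at least `k` edges (i.e. the minimum of the positive co-degrees). -/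
noncomputable def minPosCoDeg (r n : ℕ) (E : Finset (Finset (Fin n))) : ℕ :=
  sInf {d : ℕ | ∃ S : Finset (Fin n), S.card = r - 1 ∧ coDeg E S = d ∧ 0 < d}

/-- `E` contains a copy of `F`: an injection of the vertices of `F` mapping
edges of `F` to edges of `E`. -/
def Contains {α β : Type*} [DecidableEq α] [DecidableEq β]
    (F : Finset (Finset α)) (E : Finset (Finset β)) : Prop :=
  ∃ f : α → β, Function.Injective f ∧ ∀ e ∈ F, e.image f ∈ E

/-- The positive co-degree Turán number `co⁺ex_r(n, F)`: the maximum of the minimum positive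
co-degree over all `F`-free `r`-graphs on `n` vertices with at least one edge. -/
noncomputable def coPlusEx {α : Type*} [DecidableEq α] (r n : ℕ) (F : Finset (Finset α)) : ℕ :=
  sSup {d : ℕ | ∃ E : Finset (Finset (Fin n)),
    (∀ e ∈ E, e.card = r) ∧ E.Nonempty ∧ ¬ Contains F E ∧ minPosCoDeg r n E = d}



/-- third-vertex neighborhood of a pair -/
def NBd {n : ℕ} (E : Finset (Finset (Fin n))) (S : Finset (Fin n)) : Finset (Fin n) :=
  univ.filter (fun v => v ∉ S ∧ insert v S ∈ E)

lemma mem_NBd {n : ℕ} {E : Finset (Finset (Fin n))} {S : Finset (Fin n)} {v : Fin n} :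
    v ∈ NBd E S ↔ v ∉ S ∧ insert v S ∈ E := by simp [NBd]

lemma coDeg_le_card_NBd {n : ℕ} (E : Finset (Finset (Fin n))) (hE : ∀ e ∈ E, e.card = 3)
    {S : Finset (Fin n)} (hS : S.card = 2) : coDeg E S ≤ (NBd E S).card := by
  apply Finset.card_le_card_of_surjOn (fun v => insert v S)
  intro e he
  simp only [coe_filter, Set.mem_setOf_eq, mem_coe] at he
  obtain ⟨heE, hSe⟩ := he
  have hcard : (e \ S).card = 1 := by rw [card_sdiff_of_subset hSe, hE e heE, hS]
  obtain ⟨v, hv⟩ := Finset.card_eq_one.mp hcard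
  have hvme : v ∈ e \ S := hv ▸ Finset.mem_singleton_self v
  rw [Finset.mem_sdiff] at hvme
  have heq : insert v S = e := by
    apply Finset.eq_of_subset_of_card_le
    · exact Finset.insert_subset hvme.1 hSe
    · rw [Finset.card_insert_of_notMem hvme.2, hE e heE, hS]
  exact ⟨v, by simp [mem_NBd, hvme.2, heq, heE], heq⟩

lemma coDeg_le_n {n : ℕ} (E : Finset (Finset (Fin n))) (hE : ∀ e ∈ E, e.card = 3)
    {S : Finset (Fin n)} (hS : S.card = 2) : coDeg E S ≤ n := by
  calc coDeg E S ≤ (NBd E S).card := coDeg_le_card_NBd E hE hS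
  _ ≤ (univ : Finset (Fin n)).card := card_le_card (filter_subset _ _)
  _ = n := by simp

lemma pigeon {β : Type*} {s : Finset β} (hs : s.Nonempty) (f : β → ℕ) (m : ℕ)
    (h : s.card * m ≤ ∑ x ∈ s, f x) : ∃ x ∈ s, m ≤ f x := by
  by_contra hc
  push_neg at hc
  have : ∑ x ∈ s, f x < ∑ _x ∈ s, m := Finset.sum_lt_sum_of_nonempty hs hc
  rw [Finset.sum_const, smul_eq_mul] at this
  omega

lemma double_count {V β : Type*} [Fintype V] [DecidableEq V] (t : ℕ)
    (P : Finset β) (N : β → Finset V) :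
    ∑ A ∈ (univ : Finset V).powersetCard t, (P.filter (fun S => A ⊆ N S)).card
      = ∑ S ∈ P, (N S).card.choose t := by
  simp_rw [Finset.card_filter]
  rw [Finset.sum_comm]
  refine Finset.sum_congr rfl (fun S _ => ?_)
  rw [← Finset.card_filter]
  have heq : filter (fun A => A ⊆ N S) ((univ : Finset V).powersetCard t)
      = (N S).powersetCard t := by
    ext A
    simp only [mem_filter, mem_powersetCard, subset_univ, true_and]
    tauto
  rw [heq, Finset.card_powersetCard]

lemma choose_ineq (t a b X Y : ℕ) (h : Y * b ^ t ≤ X * (a + 1 - t) ^ t) :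
    Y * b.choose t ≤ X * a.choose t := by
  have h1 : Nat.factorial t * (Y * b.choose t) ≤ Nat.factorial t * (X * a.choose t) := by
    calc Nat.factorial t * (Y * b.choose t) = Y * (Nat.factorial t * b.choose t) := by ring
    _ = Y * b.descFactorial t := by rw [Nat.descFactorial_eq_factorial_mul_choose]
    _ ≤ Y * b ^ t := Nat.mul_le_mul_left _ (Nat.descFactorial_le_pow _ _)
    _ ≤ X * (a + 1 - t) ^ t := h
    _ ≤ X * a.descFactorial t := Nat.mul_le_mul_left _ (Nat.pow_sub_le_descFactorial _ _)
    _ = X * (Nat.factorial t * a.choose t) := by rw [Nat.descFactorial_eq_factorial_mul_choose]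
    _ = Nat.factorial t * (X * a.choose t) := by ring
  exact Nat.le_of_mul_le_mul_left h1 (Nat.factorial_pos t)
lemma numeric_main (t k c n K d : ℕ) (ht : 3 ≤ t) (hk : 1 ≤ k)
    (hK : K = 2 ^ (t + 3) * k ^ (t + 1) * t) (hd : d = c / K + t)
    (hC : 2 ^ t * t * k ^ t * K ^ (t + 1) + 2 * t * K < c)
    (hcn : c ≤ n) (hnk : n < k * c) :
    2 * ((d * n + t * n) * n ^ t) ≤ (c * c) * (c + 1 - t) ^ t
    ∧ t * n ^ t ≤ d * (d + 1 - t) ^ t := by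
  have hKpos : 0 < K := by subst hK; positivity
  set q := c / K with hq
  have htKc : 2 * t * K ≤ c := by omega
  have hKc : K ≤ c := by nlinarith
  have hq1 : 1 ≤ q := (Nat.one_le_div_iff hKpos).mpr hKc
  have hq2t : 2 * t ≤ q := by
    rw [hq, Nat.le_div_iff_mul_le hKpos]; nlinarith
  have hqbig : 2 ^ t * t * k ^ t * K ^ t ≤ q := by
    rw [hq, Nat.le_div_iff_mul_le hKpos]
    calc 2 ^ t * t * k ^ t * K ^ t * K = 2 ^ t * t * k ^ t * K ^ (t + 1) := by ring
    _ ≤ c := by omega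
  have hKq : K * q ≤ c := by rw [hq, mul_comm]; exact Nat.div_mul_le_self c K
  have hnkc : n ≤ k * c := le_of_lt hnk
  have hnt : n ^ t ≤ k ^ t * c ^ t := by
    calc n ^ t ≤ (k * c) ^ t := Nat.pow_le_pow_left hnkc t
    _ = k ^ t * c ^ t := mul_pow k c t
  have hqKq : q ≤ K * q := Nat.le_mul_of_pos_left q hKpos
  have htc : 2 * t ≤ c := by omega
  have hcq : c ≤ 2 * K * q := by
    have h1 : c < K * (q + 1) := Nat.lt_mul_div_succ c hKpos
    have h2 : K * (q + 1) = K * q + K := by ring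
    have h3 : K ≤ K * q := Nat.le_mul_of_pos_right K hq1
    have h4 : 2 * K * q = K * q + K * q := by ring
    have h5 : K * (q + 1) = K * q + K := by ring
    omega
  constructor
  · -- conjunct 1
    have hA : c ^ t ≤ 2 ^ t * (c + 1 - t) ^ t := by
      have h1 : c ≤ 2 * (c + 1 - t) := by omega
      calc c ^ t ≤ (2 * (c + 1 - t)) ^ t := Nat.pow_le_pow_left h1 t
      _ = 2 ^ t * (c + 1 - t) ^ t := mul_pow _ _ _
    have hB : 2 ^ t * (2 * ((d * n + t * n) * n ^ t)) ≤ c ^ (t + 2) := by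
      have hdt : d * n + t * n ≤ 2 * q * n := by
        have : d + t ≤ 2 * q := by omega
        nlinarith
      calc 2 ^ t * (2 * ((d * n + t * n) * n ^ t))
          ≤ 2 ^ t * (2 * ((2 * q * n) * n ^ t)) := by gcongr
      _ = 2 ^ (t + 2) * q * (n * n ^ t) := by ring
      _ ≤ 2 ^ (t + 2) * q * ((k * c) * (k ^ t * c ^ t)) := by gcongr
      _ = (2 ^ (t + 2) * k ^ (t + 1)) * q * c ^ (t + 1) := by ring
      _ ≤ K * q * c ^ (t + 1) := by
          have : 2 ^ (t + 2) * k ^ (t + 1) ≤ K := by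
            rw [hK]
            calc 2 ^ (t + 2) * k ^ (t + 1) = 2 ^ (t + 2) * k ^ (t + 1) * 1 := by ring
            _ ≤ 2 ^ (t + 3) * k ^ (t + 1) * t := by gcongr <;> omega
          gcongr
      _ ≤ c * c ^ (t + 1) := by gcongr
      _ = c ^ (t + 2) := by ring
    have hcomb : 2 ^ t * (2 * ((d * n + t * n) * n ^ t))
        ≤ 2 ^ t * ((c * c) * (c + 1 - t) ^ t) := by
      calc 2 ^ t * (2 * ((d * n + t * n) * n ^ t)) ≤ c ^ (t + 2) := hB
      _ = (c * c) * c ^ t := by ring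
      _ ≤ (c * c) * (2 ^ t * (c + 1 - t) ^ t) := by gcongr
      _ = 2 ^ t * ((c * c) * (c + 1 - t) ^ t) := by ring
    exact Nat.le_of_mul_le_mul_left hcomb (Nat.pow_pos (by norm_num))
  · -- conjunct 2
    have hd1 : d + 1 - t = q + 1 := by omega
    have hct : c ^ t ≤ 2 ^ t * K ^ t * q ^ t := by
      calc c ^ t ≤ (2 * K * q) ^ t := Nat.pow_le_pow_left hcq t
      _ = 2 ^ t * K ^ t * q ^ t := by rw [mul_pow, mul_pow]
    calc t * n ^ t ≤ t * (k ^ t * c ^ t) := by gcongr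
    _ ≤ t * (k ^ t * (2 ^ t * K ^ t * q ^ t)) := by gcongr
    _ = (2 ^ t * t * k ^ t * K ^ t) * q ^ t := by ring
    _ ≤ q * q ^ t := by gcongr
    _ ≤ d * (d + 1 - t) ^ t := by
        rw [hd1]
        exact Nat.mul_le_mul (by omega) (Nat.pow_le_pow_left (by omega) t)

lemma pair_eq_pair {α : Type*} [DecidableEq α] {a b c d : α} (hab : a ≠ b)
    (h : ({a, b} : Finset α) = {c, d}) : (a = c ∧ b = d) ∨ (a = d ∧ b = c) := by
  have ha : a ∈ ({c, d} : Finset α) := h ▸ Finset.mem_insert_self a {b}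
  have hb : b ∈ ({c, d} : Finset α) := h ▸ (by simp)
  simp only [Finset.mem_insert, Finset.mem_singleton] at ha hb
  rcases ha with h1 | h1 <;> rcases hb with h2 | h2
  · exact absurd (h1.trans h2.symm) hab
  · exact Or.inl ⟨h1, h2⟩
  · exact Or.inr ⟨h1, h2⟩
  · exact absurd (h1.trans h2.symm) hab

lemma exists_Kttt (t k : ℕ) (ht : 3 ≤ t) (hk : 1 ≤ k) :
    ∃ N : ℕ, ∀ n : ℕ, N ≤ n → ∀ E : Finset (Finset (Fin n)),
      (∀ e ∈ E, e.card = 3) → E.Nonempty → n < k * minPosCoDeg 3 n E →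
      ∃ A B C : Finset (Fin n), A.card = t ∧ B.card = t ∧ C.card = t ∧
        Disjoint A B ∧ Disjoint A C ∧ Disjoint B C ∧
        ∀ a ∈ A, ∀ b ∈ B, ∀ c ∈ C, insert a (insert b {c}) ∈ E := by
  set K := 2 ^ (t + 3) * k ^ (t + 1) * t with hK
  set C₀ := 2 ^ t * t * k ^ t * K ^ (t + 1) + 2 * t * K with hC₀
  refine ⟨k * (C₀ + 1), fun n hn E hE3 hEne hminE => ?_⟩
  set c := minPosCoDeg 3 n E with hcdef
  -- basic facts about c
  obtain ⟨e₀, he₀⟩ := hEne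
  have he₀3 : e₀.card = 3 := hE3 e₀ he₀
  obtain ⟨y, hy, z, hz, hyz⟩ := Finset.one_lt_card.mp (show 1 < e₀.card by omega)
  have hS₀card : ({y, z} : Finset (Fin n)).card = 2 := Finset.card_pair hyz
  have hS₀sub : ({y, z} : Finset (Fin n)) ⊆ e₀ := Finset.insert_subset hy (Finset.singleton_subset_iff.mpr hz)
  have hS₀pos : 0 < coDeg E {y, z} := by
    rw [coDeg]
    exact Finset.card_pos.mpr ⟨e₀, Finset.mem_filter.mpr ⟨he₀, hS₀sub⟩⟩
  have hsetne : coDeg E {y, z} ∈ {d : ℕ | ∃ S : Finset (Fin n),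
      S.card = 3 - 1 ∧ coDeg E S = d ∧ 0 < d} := ⟨{y, z}, hS₀card, rfl, hS₀pos⟩
  have hcmem : c ∈ {d : ℕ | ∃ S : Finset (Fin n),
      S.card = 3 - 1 ∧ coDeg E S = d ∧ 0 < d} := Nat.sInf_mem ⟨_, hsetne⟩
  have hcS : ∀ S : Finset (Fin n), S.card = 2 → 0 < coDeg E S → c ≤ coDeg E S :=
    fun S h1 h2 => Nat.sInf_le ⟨S, h1, rfl, h2⟩
  have hc1 : 0 < c := by obtain ⟨S, _, hSd, hSpos⟩ := hcmem; omega
  have hcn : c ≤ n := by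
    obtain ⟨S, hScard, hSd, hSpos⟩ := hcmem
    rw [← hSd]; exact coDeg_le_n E hE3 hScard
  have hnk : n < k * c := hminE
  have hC : C₀ < c := by
    have h1 : k * (C₀ + 1) ≤ n := hn
    have h2 := lt_of_le_of_lt h1 hnk
    have h3 : C₀ + 1 < c := lt_of_mul_lt_mul_left h2 (Nat.zero_le k)
    omega
  set d := c / K + t with hd
  obtain ⟨hnum1, hnum2⟩ := numeric_main t k c n K d ht hk hK hd (by rw [← hC₀]; exact hC) hcn hnk
  have hcNB : ∀ S : Finset (Fin n), S.card = 2 → 0 < coDeg E S → c ≤ (NBd E S).card :=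
    fun S h1 h2 => le_trans (hcS S h1 h2) (coDeg_le_card_NBd E hE3 h1)
  have hK1 : 0 < K := by rw [hK]; positivity
  have htn : t ≤ n := by
    have h1 : t * 1 ≤ t * (2 * K) := Nat.mul_le_mul_left t (by omega)
    have h2 : 2 * t * K = t * (2 * K) := by ring
    omega
  have hn0 : 0 < n := by omega
  -- the set of positive pairs
  set P := ((univ : Finset (Fin n)).powersetCard 2).filter (fun S => 0 < coDeg E S) with hP
  have hPmem : ∀ S ∈ P, S.card = 2 ∧ 0 < coDeg E S := by
    intro S hS
    rw [hP, Finset.mem_filter, Finset.mem_powersetCard] at hS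
    exact ⟨hS.1.2, hS.2⟩
  -- Stage 0 : many positive pairs
  have hPcard : c * c ≤ 2 * P.card := by
    set X := NBd E {y, z} with hX
    have hXcard : c ≤ X.card := hcNB _ hS₀card hS₀pos
    have hxz : ∀ x ∈ X, ({x, z} : Finset (Fin n)).card = 2 ∧ 0 < coDeg E {x, z} := by
      intro x hx
      rw [hX, mem_NBd] at hx
      obtain ⟨hxS, hxE⟩ := hx
      have hxz' : x ≠ z := fun h => hxS (by simp [h])
      refine ⟨Finset.card_pair hxz', ?_⟩
      rw [coDeg]
      refine Finset.card_pos.mpr ⟨insert x {y, z}, Finset.mem_filter.mpr ⟨hxE, ?_⟩⟩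
      intro u hu
      simp only [Finset.mem_insert, Finset.mem_singleton] at hu ⊢
      tauto
    set Sg := X.sigma (fun x => NBd E {x, z}) with hSg
    have hq12 : ∀ q ∈ Sg, q.1 ∈ X ∧ q.2 ∉ ({q.1, z} : Finset (Fin n)) ∧
        insert q.2 ({q.1, z} : Finset (Fin n)) ∈ E := by
      intro q hq
      rw [hSg, Finset.mem_sigma] at hq
      obtain ⟨h1, h2⟩ := hq
      rw [mem_NBd] at h2
      exact ⟨h1, h2.1, h2.2⟩
    have hSgcard : c * c ≤ Sg.card := by
      rw [hSg, Finset.card_sigma]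
      calc c * c ≤ X.card * c := Nat.mul_le_mul_right c hXcard
      _ = ∑ _x ∈ X, c := by rw [Finset.sum_const, smul_eq_mul]
      _ ≤ ∑ x ∈ X, (NBd E {x, z}).card :=
          Finset.sum_le_sum (fun x hx => hcNB _ (hxz x hx).1 (hxz x hx).2)
    have hmain : Sg.card ≤ 2 * (Sg.image (fun p => ({p.1, p.2} : Finset (Fin n)))).card := by
      apply Finset.card_le_mul_card_image
      intro a ha
      obtain ⟨p, hp, hpa⟩ := Finset.mem_image.mp ha
      have hp12 : p.2 ≠ p.1 := by
        have := (hq12 p hp).2.1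
        intro h; exact this (by simp [h])
      have hsub : Sg.filter (fun q => ({q.1, q.2} : Finset (Fin n)) = a)
          ⊆ {⟨p.1, p.2⟩, ⟨p.2, p.1⟩} := by
        intro q hq
        rw [Finset.mem_filter] at hq
        obtain ⟨hqSg, hqa⟩ := hq
        have hq12' : q.1 ≠ q.2 := by
          have := (hq12 q hqSg).2.1
          intro h; exact this (by simp [← h])
        have heq2 : ({q.1, q.2} : Finset (Fin n)) = {p.1, p.2} := by rw [hqa, ← hpa]
        rcases pair_eq_pair hq12' heq2 with ⟨h1, h2⟩ | ⟨h1, h2⟩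
        · simp only [Finset.mem_insert, Finset.mem_singleton]
          left
          cases q; cases p; simp_all
        · simp only [Finset.mem_insert, Finset.mem_singleton]
          right
          cases q; cases p; simp_all
      calc (Sg.filter (fun q => ({q.1, q.2} : Finset (Fin n)) = a)).card
          ≤ ({⟨p.1, p.2⟩, ⟨p.2, p.1⟩} : Finset ((_ : Fin n) × Fin n)).card :=
            Finset.card_le_card hsub
      _ ≤ 2 := Finset.card_insert_le _ _ |>.trans (by simp)
    have himgsub : Sg.image (fun p => ({p.1, p.2} : Finset (Fin n))) ⊆ P := by
      intro a ha
      obtain ⟨p, hp, hpa⟩ := Finset.mem_image.mp ha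
      obtain ⟨hp1, hp2, hp3⟩ := hq12 p hp
      have hp12 : p.1 ≠ p.2 := fun h => hp2 (by simp [← h])
      rw [hP, Finset.mem_filter, Finset.mem_powersetCard]
      refine ⟨⟨Finset.subset_univ _, by rw [← hpa]; exact Finset.card_pair hp12⟩, ?_⟩
      rw [← hpa, coDeg]
      refine Finset.card_pos.mpr ⟨insert p.2 ({p.1, z} : Finset (Fin n)),
        Finset.mem_filter.mpr ⟨hp3, ?_⟩⟩
      intro u hu
      simp only [Finset.mem_insert, Finset.mem_singleton] at hu ⊢
      tauto
    calc c * c ≤ Sg.card := hSgcard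
    _ ≤ 2 * (Sg.image (fun p => ({p.1, p.2} : Finset (Fin n)))).card := hmain
    _ ≤ 2 * P.card := by
        have := Finset.card_le_card himgsub
        omega
  -- Stage 1 : a good t-set A
  obtain ⟨A, hAcard, Q, hQdef, hQcard⟩ :
      ∃ A : Finset (Fin n), A.card = t ∧ ∃ Q : Finset (Finset (Fin n)),
        Q = P.filter (fun S => A ⊆ NBd E S) ∧ d * n + t * n ≤ Q.card := by
    have hdc := double_count (V := Fin n) t P (NBd E)
    have hlow : P.card * Nat.choose c t ≤ ∑ S ∈ P, ((NBd E S).card).choose t := by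
      calc P.card * Nat.choose c t = ∑ _S ∈ P, Nat.choose c t := by
            rw [Finset.sum_const, smul_eq_mul]
      _ ≤ ∑ S ∈ P, ((NBd E S).card).choose t :=
          Finset.sum_le_sum (fun S hS =>
            Nat.choose_le_choose t (hcNB S (hPmem S hS).1 (hPmem S hS).2))
    have hkey : (n.choose t) * (d * n + t * n) ≤ P.card * Nat.choose c t := by
      rw [mul_comm (n.choose t)]
      apply choose_ineq t c n P.card (d * n + t * n)
      have h2 : 2 * ((d * n + t * n) * n ^ t) ≤ 2 * (P.card * (c + 1 - t) ^ t) := by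
        calc 2 * ((d * n + t * n) * n ^ t) ≤ (c * c) * (c + 1 - t) ^ t := hnum1
        _ ≤ (2 * P.card) * (c + 1 - t) ^ t := by gcongr
        _ = 2 * (P.card * (c + 1 - t) ^ t) := by ring
      omega
    have huniv : ((univ : Finset (Fin n)).powersetCard t).Nonempty := by
      rw [Finset.powersetCard_nonempty, Finset.card_univ, Fintype.card_fin]
      exact htn
    obtain ⟨A, hA, hcountA⟩ := pigeon huniv
      (fun A => (P.filter (fun S => A ⊆ NBd E S)).card) (d * n + t * n) (by
        rw [Finset.card_powersetCard, Finset.card_univ, Fintype.card_fin, hdc]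
        exact le_trans hkey hlow)
    exact ⟨A, (Finset.mem_powersetCard.mp hA).2, _, rfl, hcountA⟩
  -- Stage 2 : remove pairs meeting A
  obtain ⟨G, hGdef, hGcard⟩ :
      ∃ G : Finset (Finset (Fin n)), G = Q.filter (fun S => Disjoint S A) ∧
        d * n ≤ G.card := by
    refine ⟨Q.filter (fun S => Disjoint S A), rfl, ?_⟩
    have hsplit := Finset.card_filter_add_card_filter_not
      (s := Q) (p := fun S => Disjoint S A)
    have hbadsub : Q.filter (fun S => ¬ Disjoint S A) ⊆
        A.biUnion (fun a => ((univ : Finset (Fin n)).powersetCard 2).filter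
          (fun S => a ∈ S)) := by
      intro S hS
      rw [Finset.mem_filter] at hS
      obtain ⟨hSQ, hSd⟩ := hS
      obtain ⟨a, haS, haA⟩ := Finset.not_disjoint_iff.mp hSd
      refine Finset.mem_biUnion.mpr ⟨a, haA, ?_⟩
      rw [Finset.mem_filter, Finset.mem_powersetCard]
      have hS2 : S.card = 2 := by
        have h' := hQdef ▸ hSQ
        rw [Finset.mem_filter] at h'
        exact (hPmem S h'.1).1
      exact ⟨⟨Finset.subset_univ _, hS2⟩, haS⟩
    have hone : ∀ a : Fin n,
        (((univ : Finset (Fin n)).powersetCard 2).filter (fun S => a ∈ S)).card ≤ n := by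
      intro a
      have hsurj : Set.SurjOn (fun b => ({a, b} : Finset (Fin n))) ↑(univ : Finset (Fin n))
          ↑(((univ : Finset (Fin n)).powersetCard 2).filter (fun S => a ∈ S)) := by
        intro S hS
        simp only [Finset.coe_filter, Set.mem_setOf_eq, Finset.mem_powersetCard] at hS
        obtain ⟨⟨_, hS2⟩, haS⟩ := hS
        obtain ⟨x, y, hxy, rfl⟩ := Finset.card_eq_two.mp hS2
        simp only [Finset.mem_insert, Finset.mem_singleton] at haS
        rcases haS with rfl | rfl
        · exact ⟨y, by simp⟩
        · exact ⟨x, by simp [Finset.pair_comm]⟩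
      calc (((univ : Finset (Fin n)).powersetCard 2).filter (fun S => a ∈ S)).card
          ≤ (univ : Finset (Fin n)).card := Finset.card_le_card_of_surjOn _ hsurj
      _ = n := by simp
    have hbad : (Q.filter (fun S => ¬ Disjoint S A)).card ≤ t * n := by
      calc (Q.filter (fun S => ¬ Disjoint S A)).card
          ≤ (A.biUnion (fun a => ((univ : Finset (Fin n)).powersetCard 2).filter
            (fun S => a ∈ S))).card := Finset.card_le_card hbadsub
      _ ≤ ∑ a ∈ A, (((univ : Finset (Fin n)).powersetCard 2).filter
            (fun S => a ∈ S)).card := Finset.card_biUnion_le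
      _ ≤ ∑ _a ∈ A, n := Finset.sum_le_sum (fun a _ => hone a)
      _ = t * n := by rw [Finset.sum_const, smul_eq_mul, hAcard]
    omega
  have hGmem : ∀ S ∈ G, S.card = 2 ∧ Disjoint S A ∧ A ⊆ NBd E S := by
    intro S hS
    rw [hGdef, Finset.mem_filter, hQdef, Finset.mem_filter] at hS
    exact ⟨(hPmem S hS.1.1).1, hS.2, hS.1.2⟩
  -- Stage 3 : K(t,t) in G
  obtain ⟨B, hBcard, C, hCcard, hBCdisj, hBCedge⟩ :
      ∃ B : Finset (Fin n), B.card = t ∧ ∃ C : Finset (Fin n), C.card = t ∧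
        Disjoint B C ∧ ∀ b ∈ B, ∀ w ∈ C, ({b, w} : Finset (Fin n)) ∈ G := by
    classical
    set GN : Fin n → Finset (Fin n) :=
      fun w => univ.filter (fun b => ({w, b} : Finset (Fin n)) ∈ G) with hGN
    have hGNmem : ∀ w b, b ∈ GN w ↔ ({w, b} : Finset (Fin n)) ∈ G := by
      intro w b; rw [hGN]; simp
    have hGNcard : ∀ w, (GN w).card = (G.filter (fun S => w ∈ S)).card := by
      intro w
      apply Finset.card_bij (fun b _ => ({w, b} : Finset (Fin n)))
      · intro b hb
        rw [hGNmem] at hb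
        exact Finset.mem_filter.mpr ⟨hb, by simp⟩
      · intro b hb b' hb' heq
        rw [hGNmem] at hb hb'
        have hbw : b ≠ w := by
          intro h
          subst h
          have h2 := (hGmem _ hb).1
          simp at h2
        have hmem : b ∈ ({w, b'} : Finset (Fin n)) := heq ▸ (by simp)
        simp only [Finset.mem_insert, Finset.mem_singleton] at hmem
        tauto
      · intro S hS
        rw [Finset.mem_filter] at hS
        obtain ⟨hSG, hwS⟩ := hS
        have hS2 := (hGmem _ hSG).1
        obtain ⟨x, y', hxy, rfl⟩ := Finset.card_eq_two.mp hS2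
        simp only [Finset.mem_insert, Finset.mem_singleton] at hwS
        rcases hwS with rfl | rfl
        · exact ⟨y', by rw [hGNmem]; exact hSG, rfl⟩
        · exact ⟨x, by rw [hGNmem, Finset.pair_comm]; exact hSG, Finset.pair_comm _ _⟩
    have hdegsum : ∑ w : Fin n, (GN w).card = 2 * G.card := by
      simp_rw [hGNcard, Finset.card_filter]
      rw [Finset.sum_comm]
      have hper : ∀ S ∈ G, (∑ w : Fin n, if w ∈ S then 1 else 0) = 2 := by
        intro S hS
        rw [← Finset.card_filter]
        have h1 : (univ.filter (fun w => w ∈ S)) = S := Finset.filter_univ_mem S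
        rw [h1]
        exact (hGmem _ hS).1
      rw [Finset.sum_congr rfl hper, Finset.sum_const, smul_eq_mul, mul_comm]
    set big := univ.filter (fun w => d ≤ (GN w).card) with hbigdef
    have hbigcard : d ≤ big.card := by
      have h1 : ∑ w : Fin n, (GN w).card ≤ big.card * n + n * d := by
        rw [← Finset.sum_filter_add_sum_filter_not univ (fun w => d ≤ (GN w).card)]
        apply add_le_add
        · calc ∑ w ∈ big, (GN w).card ≤ ∑ _w ∈ big, n :=
                Finset.sum_le_sum (fun w _ => by
                  calc (GN w).card ≤ (univ : Finset (Fin n)).card :=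
                        Finset.card_le_card (Finset.filter_subset _ _)
                  _ = n := by simp)
          _ = big.card * n := by rw [Finset.sum_const, smul_eq_mul]
        · calc ∑ w ∈ univ.filter (fun w => ¬ d ≤ (GN w).card), (GN w).card
              ≤ ∑ _w ∈ univ.filter (fun w => ¬ d ≤ (GN w).card), d :=
                Finset.sum_le_sum (fun w hw => by
                  rw [Finset.mem_filter] at hw
                  omega)
          _ = (univ.filter (fun w => ¬ d ≤ (GN w).card)).card * d := by
                rw [Finset.sum_const, smul_eq_mul]
          _ ≤ n * d := by
                have : (univ.filter (fun w => ¬ d ≤ (GN w).card)).card ≤ n := by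
                  calc (univ.filter (fun w => ¬ d ≤ (GN w).card)).card
                      ≤ (univ : Finset (Fin n)).card :=
                        Finset.card_le_card (Finset.filter_subset _ _)
                  _ = n := by simp
                exact Nat.mul_le_mul_right d this
      have h2 : 2 * (d * n) ≤ 2 * G.card := by omega
      have h3 : n * d = d * n := mul_comm n d
      have h4 : d * n ≤ big.card * n := by omega
      exact Nat.le_of_mul_le_mul_right h4 hn0
    have hdc2 := double_count (V := Fin n) t (univ : Finset (Fin n)) GN
    have hlow2 : d * Nat.choose d t ≤ ∑ w : Fin n, ((GN w).card).choose t := by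
      calc d * Nat.choose d t ≤ big.card * Nat.choose d t :=
            Nat.mul_le_mul_right _ hbigcard
      _ = ∑ _w ∈ big, Nat.choose d t := by rw [Finset.sum_const, smul_eq_mul]
      _ ≤ ∑ w ∈ big, ((GN w).card).choose t :=
            Finset.sum_le_sum (fun w hw => Nat.choose_le_choose t (by
              rw [hbigdef, Finset.mem_filter] at hw
              exact hw.2))
      _ ≤ ∑ w : Fin n, ((GN w).card).choose t :=
            Finset.sum_le_sum_of_subset (Finset.filter_subset _ _)
    have hkey2 : n.choose t * t ≤ d * Nat.choose d t := by
      rw [mul_comm]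
      exact choose_ineq t d n d t hnum2
    have huniv2 : ((univ : Finset (Fin n)).powersetCard t).Nonempty := by
      rw [Finset.powersetCard_nonempty, Finset.card_univ, Fintype.card_fin]
      exact htn
    obtain ⟨B, hB, hWcard⟩ := pigeon huniv2
      (fun B => ((univ : Finset (Fin n)).filter (fun w => B ⊆ GN w)).card) t (by
        rw [Finset.card_powersetCard, Finset.card_univ, Fintype.card_fin, hdc2]
        exact le_trans hkey2 hlow2)
    obtain ⟨C, hCW, hCcard⟩ := Finset.exists_subset_card_eq hWcard
    have hBC : ∀ b ∈ B, ∀ w ∈ C, ({b, w} : Finset (Fin n)) ∈ G := by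
      intro b hb w hw
      have hwW := hCW hw
      rw [Finset.mem_filter] at hwW
      have hbGN : b ∈ GN w := hwW.2 hb
      rw [hGNmem] at hbGN
      rw [Finset.pair_comm]
      exact hbGN
    have hdisj : Disjoint B C := by
      rw [Finset.disjoint_left]
      intro b hbB hbC
      have hbb := hBC b hbB b hbC
      have h2 := (hGmem _ hbb).1
      simp at h2
    exact ⟨B, (Finset.mem_powersetCard.mp hB).2, C, hCcard, hdisj, hBC⟩
  -- Assemble
  have hCne : C.Nonempty := Finset.card_pos.mp (by omega)
  have hBne : B.Nonempty := Finset.card_pos.mp (by omega)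
  have hAB : Disjoint A B := by
    rw [Finset.disjoint_right]
    intro b hb hbA
    obtain ⟨w, hw⟩ := hCne
    have := (hGmem _ (hBCedge b hb w hw)).2.1
    exact (Finset.disjoint_left.mp this (by simp)) hbA
  have hAC : Disjoint A C := by
    rw [Finset.disjoint_right]
    intro w hw hwA
    obtain ⟨b, hb⟩ := hBne
    have := (hGmem _ (hBCedge b hb w hw)).2.1
    exact (Finset.disjoint_left.mp this (by simp)) hwA
  refine ⟨A, B, C, hAcard, hBcard, hCcard, hAB, hAC, hBCdisj, ?_⟩
  intro a ha b hb w hw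
  have hmem := hBCedge b hb w hw
  have hsub := (hGmem _ hmem).2.2
  have : a ∈ NBd E {b, w} := hsub ha
  rw [mem_NBd] at this
  exact this.2

lemma contains_of_Kttt {α : Type} [Fintype α] [DecidableEq α] (F : Finset (Finset α))
    (hcard : ∀ e ∈ F, e.card = 3) (g : α → Fin 3) (hg : ∀ e ∈ F, (e.image g).card = 3)
    {n : ℕ} (E : Finset (Finset (Fin n))) (A B C : Finset (Fin n))
    (hA : A.card = Fintype.card α) (hB : B.card = Fintype.card α)
    (hC : C.card = Fintype.card α)
    (hAB : Disjoint A B) (hAC : Disjoint A C) (hBC : Disjoint B C)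
    (hE : ∀ a ∈ A, ∀ b ∈ B, ∀ c ∈ C, insert a (insert b {c}) ∈ E) :
    Contains F E := by
  have hcA : Fintype.card α = Fintype.card {x // x ∈ A} := by rw [Fintype.card_coe, hA]
  have hcB : Fintype.card α = Fintype.card {x // x ∈ B} := by rw [Fintype.card_coe, hB]
  have hcC : Fintype.card α = Fintype.card {x // x ∈ C} := by rw [Fintype.card_coe, hC]
  let φA : α ≃ {x // x ∈ A} := Fintype.equivOfCardEq hcA
  let φB : α ≃ {x // x ∈ B} := Fintype.equivOfCardEq hcB
  let φC : α ≃ {x // x ∈ C} := Fintype.equivOfCardEq hcC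
  set f : α → Fin n := fun v =>
    if g v = 0 then (φA v : Fin n) else if g v = 1 then (φB v : Fin n) else (φC v : Fin n)
    with hf
  have hfA : ∀ v, g v = 0 → f v = (φA v : Fin n) := by intro v h; simp [hf, h]
  have hfB : ∀ v, g v = 1 → f v = (φB v : Fin n) := by intro v h; simp [hf, h]
  have hfC : ∀ v, g v = 2 → f v = (φC v : Fin n) := by
    intro v h
    have h0 : g v ≠ 0 := by rw [h]; decide
    have h1 : g v ≠ 1 := by rw [h]; decide
    simp [hf, h0, h1]
  have hclass : ∀ v : α, (g v = 0 ∧ f v ∈ A) ∨ (g v = 1 ∧ f v ∈ B) ∨ (g v = 2 ∧ f v ∈ C) := by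
    intro v
    have : g v = 0 ∨ g v = 1 ∨ g v = 2 := by omega
    rcases this with h | h | h
    · exact Or.inl ⟨h, by rw [hfA v h]; exact (φA v).2⟩
    · exact Or.inr (Or.inl ⟨h, by rw [hfB v h]; exact (φB v).2⟩)
    · exact Or.inr (Or.inr ⟨h, by rw [hfC v h]; exact (φC v).2⟩)
  have hinj : Function.Injective f := by
    intro u v huv
    rcases hclass u with ⟨hu, hmu⟩ | ⟨hu, hmu⟩ | ⟨hu, hmu⟩ <;>
      rcases hclass v with ⟨hv, hmv⟩ | ⟨hv, hmv⟩ | ⟨hv, hmv⟩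
    · have h1 := hfA u hu; have h2 := hfA v hv
      have : (φA u : Fin n) = (φA v : Fin n) := by rw [← h1, ← h2, huv]
      exact φA.injective (Subtype.coe_injective this)
    · exact absurd hmv (Finset.disjoint_left.mp hAB (huv ▸ hmu))
    · exact absurd hmv (Finset.disjoint_left.mp hAC (huv ▸ hmu))
    · exact absurd hmu (Finset.disjoint_left.mp hAB (huv.symm ▸ hmv))
    · have h1 := hfB u hu; have h2 := hfB v hv
      have : (φB u : Fin n) = (φB v : Fin n) := by rw [← h1, ← h2, huv]
      exact φB.injective (Subtype.coe_injective this)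
    · exact absurd hmv (Finset.disjoint_left.mp hBC (huv ▸ hmu))
    · exact absurd hmu (Finset.disjoint_left.mp hAC (huv.symm ▸ hmv))
    · exact absurd hmu (Finset.disjoint_left.mp hBC (huv.symm ▸ hmv))
    · have h1 := hfC u hu; have h2 := hfC v hv
      have : (φC u : Fin n) = (φC v : Fin n) := by rw [← h1, ← h2, huv]
      exact φC.injective (Subtype.coe_injective this)
  refine ⟨f, hinj, ?_⟩
  intro e he
  have hecard := hcard e he
  have himg : e.image g = (univ : Finset (Fin 3)) := by
    apply Finset.eq_univ_of_card
    rw [hg e he]; simp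
  have h0 : (0 : Fin 3) ∈ e.image g := himg ▸ Finset.mem_univ _
  have h1 : (1 : Fin 3) ∈ e.image g := himg ▸ Finset.mem_univ _
  have h2 : (2 : Fin 3) ∈ e.image g := himg ▸ Finset.mem_univ _
  obtain ⟨a, ha, hga⟩ := Finset.mem_image.mp h0
  obtain ⟨b, hb, hgb⟩ := Finset.mem_image.mp h1
  obtain ⟨c, hc, hgc⟩ := Finset.mem_image.mp h2
  have hab : a ≠ b := fun h => by rw [h, hgb] at hga; exact absurd hga (by decide)
  have hac : a ≠ c := fun h => by rw [h, hgc] at hga; exact absurd hga (by decide)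
  have hbc : b ≠ c := fun h => by rw [h, hgc] at hgb; exact absurd hgb (by decide)
  have hesub : ({a, b, c} : Finset α) ⊆ e := by
    intro u hu
    simp only [Finset.mem_insert, Finset.mem_singleton] at hu
    rcases hu with rfl | rfl | rfl <;> assumption
  have habc_card : ({a, b, c} : Finset α).card = 3 := by
    rw [Finset.card_insert_of_notMem (by simp [hab, hac]),
      Finset.card_insert_of_notMem (by simp [hbc]), Finset.card_singleton]
  have heeq : ({a, b, c} : Finset α) = e :=
    Finset.eq_of_subset_of_card_le hesub (by omega)
  rw [← heeq]
  rw [Finset.image_insert, Finset.image_insert, Finset.image_singleton]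
  rw [hfA a hga, hfB b hgb, hfC c hgc]
  exact hE _ (φA a).2 _ (φB b).2 _ (φC c).2

def c3 (n : ℕ) : Fin n → Fin 3 := fun v => ⟨v.val % 3, Nat.mod_lt _ (by norm_num)⟩

def E3p (n : ℕ) : Finset (Finset (Fin n)) :=
  ((univ : Finset (Fin n)).powersetCard 3).filter (fun e => (e.image (c3 n)).card = 3)

lemma E3p_cards (n : ℕ) : ∀ e ∈ E3p n, e.card = 3 := by
  intro e he
  rw [E3p, Finset.mem_filter, Finset.mem_powersetCard] at he
  exact he.1.2

lemma E3p_nonempty {n : ℕ} (h : 3 ≤ n) : (E3p n).Nonempty := by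
  refine ⟨(univ : Finset (Fin 3)).image (fun i => Fin.castLE h i), ?_⟩
  have hcomp : ∀ i : Fin 3, c3 n (Fin.castLE h i) = i := by
    intro i
    apply Fin.ext
    have hi := i.isLt
    show (Fin.castLE h i).val % 3 = i.val
    rw [Fin.coe_castLE]
    omega
  have hinj : Function.Injective (fun i : Fin 3 => Fin.castLE h i) :=
    fun i j hij => Fin.castLE_injective h hij
  have hcard : ((univ : Finset (Fin 3)).image (fun i => Fin.castLE h i)).card = 3 := by
    rw [Finset.card_image_of_injective _ hinj]; simp
  rw [E3p, Finset.mem_filter, Finset.mem_powersetCard]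
  refine ⟨⟨Finset.subset_univ _, hcard⟩, ?_⟩
  rw [Finset.image_image]
  have : ((fun v => c3 n v) ∘ fun i : Fin 3 => Fin.castLE h i) = id := by
    funext i; exact hcomp i
  rw [this, Finset.image_id]
  simp

lemma minPosCoDeg_le_n (n : ℕ) (E : Finset (Finset (Fin n))) (hE3 : ∀ e ∈ E, e.card = 3) :
    minPosCoDeg 3 n E ≤ n := by
  rw [minPosCoDeg]
  by_cases hne : {d : ℕ | ∃ S : Finset (Fin n), S.card = 3 - 1 ∧ coDeg E S = d ∧ 0 < d}.Nonempty
  · obtain ⟨S, hScard, hSd, _⟩ := Nat.sInf_mem hne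
    rw [← hSd]
    exact coDeg_le_n E hE3 hScard
  · rw [Set.not_nonempty_iff_eq_empty] at hne
    rw [hne, Nat.sInf_empty]
    exact Nat.zero_le n

lemma minPosCoDeg_E3p {n : ℕ} (h : 3 ≤ n) : n / 3 ≤ minPosCoDeg 3 n (E3p n) := by
  rw [minPosCoDeg]
  obtain ⟨e₀, he₀⟩ := E3p_nonempty h
  have he₀3 : e₀.card = 3 := E3p_cards n e₀ he₀
  obtain ⟨y, hy, z, hz, hyz⟩ := Finset.one_lt_card.mp (show 1 < e₀.card by omega)
  have hS₀card : ({y, z} : Finset (Fin n)).card = 2 := Finset.card_pair hyz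
  have hS₀pos : 0 < coDeg (E3p n) {y, z} := by
    rw [coDeg]
    exact Finset.card_pos.mpr ⟨e₀, Finset.mem_filter.mpr ⟨he₀,
      Finset.insert_subset hy (Finset.singleton_subset_iff.mpr hz)⟩⟩
  have hsetne : {d : ℕ | ∃ S : Finset (Fin n),
      S.card = 3 - 1 ∧ coDeg (E3p n) S = d ∧ 0 < d}.Nonempty :=
    ⟨_, ⟨{y, z}, hS₀card, rfl, hS₀pos⟩⟩
  apply le_csInf hsetne
  rintro dd ⟨S, hScard, rfl, hdpos⟩
  -- find an edge containing S
  obtain ⟨e, hef⟩ := Finset.card_pos.mp hdpos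
  rw [Finset.mem_filter] at hef
  obtain ⟨heE, hSe⟩ := hef
  have he3 : e.card = 3 := E3p_cards n e heE
  have himg3 : (e.image (c3 n)).card = 3 := by
    rw [E3p, Finset.mem_filter] at heE
    exact heE.2
  have hinjOn : Set.InjOn (c3 n) ↑e := by
    apply Finset.card_image_iff.mp
    rw [himg3, he3]
  obtain ⟨u, v, huv, rfl⟩ := Finset.card_eq_two.mp hScard
  have hu : u ∈ e := hSe (by simp)
  have hv : v ∈ e := hSe (by simp)
  have hcls : c3 n u ≠ c3 n v := fun hc => huv (hinjOn hu hv hc)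
  have hua := (c3 n u).isLt
  have hvb := (c3 n v).isLt
  have hab : (c3 n u).val ≠ (c3 n v).val := fun hc => hcls (Fin.ext hc)
  set j : Fin 3 := ⟨3 - (c3 n u).val - (c3 n v).val, by omega⟩ with hj
  have hju : j ≠ c3 n u := by
    apply Fin.ne_of_val_ne
    show 3 - (c3 n u).val - (c3 n v).val ≠ (c3 n u).val
    omega
  have hjv : j ≠ c3 n v := by
    apply Fin.ne_of_val_ne
    show 3 - (c3 n u).val - (c3 n v).val ≠ (c3 n v).val
    omega
  set W := (univ : Finset (Fin n)).filter (fun w => c3 n w = j) with hW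
  have hWcard : n / 3 ≤ W.card := by
    have hj3 := j.isLt
    have hmain : (univ : Finset (Fin (n / 3))).card ≤ W.card := by
      apply Finset.card_le_card_of_injOn
        (fun i : Fin (n / 3) => (⟨3 * i.val + j.val, by
          have hi := i.isLt
          have h3 : 3 * (n / 3) ≤ n := Nat.mul_div_le n 3
          omega⟩ : Fin n))
      · intro i _
        rw [hW, Finset.mem_coe, Finset.mem_filter]
        refine ⟨Finset.mem_univ _, Fin.ext ?_⟩
        show (3 * i.val + j.val) % 3 = j.val
        omega
      · intro i _ i' _ hii
        have : 3 * i.val + j.val = 3 * i'.val + j.val := congrArg Fin.val hii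
        exact Fin.ext (by omega)
    simpa using hmain
  refine le_trans hWcard ?_
  rw [coDeg]
  apply Finset.card_le_card_of_injOn (fun w => insert w {u, v})
  · intro w hw
    rw [hW, Finset.mem_coe, Finset.mem_filter] at hw
    have hwj : c3 n w = j := hw.2
    have hwu : w ≠ u := fun hc => hju (by rw [← hc, hwj])
    have hwv : w ≠ v := fun hc => hjv (by rw [← hc, hwj])
    have hwS : w ∉ ({u, v} : Finset (Fin n)) := by simp [hwu, hwv]
    rw [Finset.mem_coe, Finset.mem_filter]
    constructor
    · rw [E3p, Finset.mem_filter, Finset.mem_powersetCard]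
      refine ⟨⟨Finset.subset_univ _, ?_⟩, ?_⟩
      · rw [Finset.card_insert_of_notMem hwS, hScard]
      · rw [Finset.image_insert, Finset.image_insert, Finset.image_singleton, hwj]
        rw [Finset.card_insert_of_notMem (by simp [hju, hjv]),
          Finset.card_insert_of_notMem (by simp [hcls]), Finset.card_singleton]
    · exact Finset.subset_insert _ _
  · intro w hw w' hw' heq
    have hwm : w ∈ W := hw
    have hwm' : w' ∈ W := hw'
    rw [hW, Finset.mem_filter] at hwm hwm'
    have hwu : w ∉ ({u, v} : Finset (Fin n)) := by
      have hwj : c3 n w = j := hwm.2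
      simp only [Finset.mem_insert, Finset.mem_singleton]
      push_neg
      exact ⟨fun hc => hju (by rw [← hc, hwj]), fun hc => hjv (by rw [← hc, hwj])⟩
    have hwu' : w' ∉ ({u, v} : Finset (Fin n)) := by
      have hwj : c3 n w' = j := hwm'.2
      simp only [Finset.mem_insert, Finset.mem_singleton]
      push_neg
      exact ⟨fun hc => hju (by rw [← hc, hwj]), fun hc => hjv (by rw [← hc, hwj])⟩
    have heq' : insert w ({u, v} : Finset (Fin n)) = insert w' {u, v} := heq
    have : w ∈ insert w' ({u, v} : Finset (Fin n)) := heq' ▸ Finset.mem_insert_self w {u, v}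
    simp only [Finset.mem_insert, Finset.mem_singleton] at this hwu
    tauto


lemma coPlusEx_le_n {α : Type*} [DecidableEq α] (F : Finset (Finset α)) (n : ℕ) :
    coPlusEx 3 n F ≤ n := by
  rw [coPlusEx]
  by_cases hS : {d : ℕ | ∃ E : Finset (Finset (Fin n)),
      (∀ e ∈ E, e.card = 3) ∧ E.Nonempty ∧ ¬ Contains F E ∧ minPosCoDeg 3 n E = d}.Nonempty
  · apply csSup_le hS
    rintro d ⟨E, hE3, _, _, hEd⟩
    rw [← hEd]
    exact minPosCoDeg_le_n n E hE3
  · rw [Set.not_nonempty_iff_eq_empty] at hS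
    rw [hS, csSup_empty]
    exact Nat.zero_le n

lemma coPlusEx_ge_third {α : Type} [Fintype α] [DecidableEq α] (F : Finset (Finset α))
    (hnot : ¬ ∃ g : α → Fin 3, ∀ e ∈ F, (e.image g).card = 3) {n : ℕ} (h : 3 ≤ n) :
    n / 3 ≤ coPlusEx 3 n F := by
  have hncont : ¬ Contains F (E3p n) := by
    rintro ⟨f, hinj, hmap⟩
    apply hnot
    refine ⟨c3 n ∘ f, fun e he => ?_⟩
    have h1 := hmap e he
    rw [E3p, Finset.mem_filter] at h1
    rw [← Finset.image_image]
    exact h1.2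
  have hd : minPosCoDeg 3 n (E3p n) ∈ {d : ℕ | ∃ E : Finset (Finset (Fin n)),
      (∀ e ∈ E, e.card = 3) ∧ E.Nonempty ∧ ¬ Contains F E ∧ minPosCoDeg 3 n E = d} :=
    ⟨E3p n, E3p_cards n, E3p_nonempty h, hncont, rfl⟩
  have hbdd : BddAbove {d : ℕ | ∃ E : Finset (Finset (Fin n)),
      (∀ e ∈ E, e.card = 3) ∧ E.Nonempty ∧ ¬ Contains F E ∧ minPosCoDeg 3 n E = d} := by
    refine ⟨n, ?_⟩
    rintro d ⟨E, hE3, _, _, hEd⟩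
    rw [← hEd]
    exact minPosCoDeg_le_n n E hE3
  calc n / 3 ≤ minPosCoDeg 3 n (E3p n) := minPosCoDeg_E3p h
  _ ≤ coPlusEx 3 n F := le_csSup hbdd hd

lemma coPlusEx_le_div {α : Type} [Fintype α] [DecidableEq α] (F : Finset (Finset α))
    (hcard : ∀ e ∈ F, e.card = 3) (hne : F.Nonempty)
    (g : α → Fin 3) (hg : ∀ e ∈ F, (e.image g).card = 3) (k : ℕ) (hk : 1 ≤ k) :
    ∃ N : ℕ, ∀ n : ℕ, N ≤ n → k * coPlusEx 3 n F ≤ n := by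
  have ht : 3 ≤ Fintype.card α := by
    obtain ⟨e, he⟩ := hne
    calc 3 = e.card := (hcard e he).symm
    _ ≤ Fintype.card α := by
      rw [← Finset.card_univ]
      exact Finset.card_le_card (Finset.subset_univ e)
  obtain ⟨N, hN⟩ := exists_Kttt (Fintype.card α) k ht hk
  refine ⟨N, fun n hn => ?_⟩
  by_cases hSne : {d : ℕ | ∃ E : Finset (Finset (Fin n)),
      (∀ e ∈ E, e.card = 3) ∧ E.Nonempty ∧ ¬ Contains F E ∧ minPosCoDeg 3 n E = d}.Nonempty
  · have hbdd : BddAbove {d : ℕ | ∃ E : Finset (Finset (Fin n)),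
        (∀ e ∈ E, e.card = 3) ∧ E.Nonempty ∧ ¬ Contains F E ∧ minPosCoDeg 3 n E = d} := by
      refine ⟨n, ?_⟩
      rintro d ⟨E, hE3, _, _, hEd⟩
      rw [← hEd]
      exact minPosCoDeg_le_n n E hE3
    obtain ⟨E, hE3, hEne, hnc, hEd⟩ := Nat.sSup_mem hSne hbdd
    rw [coPlusEx, ← hEd]
    by_contra hlt
    push_neg at hlt
    obtain ⟨A, B, C, hA, hB, hC, hAB, hAC, hBC, hedge⟩ :=
      hN n hn E hE3 hEne (by omega)
    exact hnc (contains_of_Kttt F hcard g hg E A B C hA hB hC hAB hAC hBC hedge)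
  · rw [Set.not_nonempty_iff_eq_empty] at hSne
    rw [coPlusEx, hSne, csSup_empty]
    simp

def K4minus : Finset (Finset (Fin 4)) := {{0,1,2}, {0,1,3}, {0,2,3}}

def K4 : Finset (Finset (Fin 4)) := {{0,1,2}, {0,1,3}, {0,2,3}, {1,2,3}}

def F5 : Finset (Finset (Fin 5)) := {{0,1,2}, {0,1,3}, {2,3,4}}

def F32 : Finset (Finset (Fin 5)) := {{0,1,2}, {0,3,4}, {1,3,4}, {2,3,4}}

def Fano : Finset (Finset (Fin 7)) :=
  {{0,1,2}, {2,3,4}, {0,4,5}, {1,3,5}, {0,3,6}, {1,4,6}, {2,5,6}}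

def F33 : Finset (Finset (Fin 6)) :=
  {{0,1,2}, {0,3,4}, {0,3,5}, {0,4,5}, {1,3,4}, {1,3,5}, {1,4,5}, {2,3,4}, {2,3,5}, {2,4,5}}

def C5 : Finset (Finset (Fin 5)) := {{0,1,2}, {1,2,3}, {2,3,4}, {0,3,4}, {0,1,4}}

def C5minus : Finset (Finset (Fin 5)) := {{0,1,2}, {1,2,3}, {2,3,4}, {0,3,4}}

def K222 : Finset (Finset (Fin 6)) :=
  {{0,2,4}, {0,2,5}, {0,3,4}, {0,3,5}, {1,2,4}, {1,2,5}, {1,3,4}, {1,3,5}}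

/-- `J k`: the 3-graph on `k+1` vertices whose edges are all triples containing the
distinguished vertex `0`. -/
def Jgraph (k : ℕ) : Finset (Finset (Fin (k+1))) :=
  (Finset.univ.powersetCard 3).filter (fun e => (0 : Fin (k+1)) ∈ e)

/-- `E` is (isomorphic to) the complete balanced `k`-partite 3-graph on `n` vertices:
there is a partition of the vertices into `k` classes whose sizes differ by at most one,
such that the edges are exactly the triples of vertices in three pairwise distinct classes. -/
def IsCompleteBalancedMultipartite (n k : ℕ) (E : Finset (Finset (Fin n))) : Prop :=
  ∃ f : Fin n → Fin k,
    (∀ i j : Fin k, (Finset.univ.filter (fun v => f v = i)).card ≤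
      (Finset.univ.filter (fun v => f v = j)).card + 1) ∧
    ∀ e : Finset (Fin n), e ∈ E ↔ (e.card = 3 ∧ (e.image f).card = 3)

/-- The unique (6,3,2)-design `H₆`. -/
def H6 : Finset (Finset (Fin 6)) :=
  {{0,1,2}, {0,1,3}, {2,3,4}, {2,3,5}, {0,4,5}, {1,4,5}, {0,2,4}, {0,3,5}, {1,2,5}, {1,3,4}}

/-- `E` is (isomorphic to) a balanced blow-up of `H₆` on `n` vertices: the vertices are
partitioned into six classes of equal size, and the edges are exactly the triples whose
three vertices lie in classes forming an edge of `H₆`. -/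
def IsBalancedH6Blowup (n : ℕ) (E : Finset (Finset (Fin n))) : Prop :=
  ∃ f : Fin n → Fin 6,
    (∀ i j : Fin 6, (Finset.univ.filter (fun v => f v = i)).card =
      (Finset.univ.filter (fun v => f v = j)).card) ∧
    ∀ e : Finset (Fin n), e ∈ E ↔ (e.card = 3 ∧ e.image f ∈ H6)

/-- The positive co-degree density of a 3-graph jumps from `0` to `1/3`:
if `limsup co⁺ex(n,F)/n > 0` then `limsup co⁺ex(n,F)/n ≥ 1/3`. -/
theorem coPlusEx_density_jump {α : Type} [Fintype α] [DecidableEq α]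
    (F : Finset (Finset α)) (hcard : ∀ e ∈ F, e.card = 3) (hne : F.Nonempty)
    (hpos : 0 < Filter.limsup (fun n : ℕ => (coPlusEx 3 n F : ℝ) / n) Filter.atTop) :
    1 / 3 ≤ Filter.limsup (fun n : ℕ => (coPlusEx 3 n F : ℝ) / n) Filter.atTop := by
  set u : ℕ → ℝ := fun n : ℕ => (coPlusEx 3 n F : ℝ) / n with hu
  have hu0 : ∀ n, 0 ≤ u n := fun n => by rw [hu]; positivity
  have hu1 : ∀ n, u n ≤ 1 := by
    intro n
    rcases Nat.eq_zero_or_pos n with h | h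
    · simp [hu, h]
    · rw [hu]
      have h1 := coPlusEx_le_n F n
      have hn0 : (0:ℝ) < n := by exact_mod_cast h
      simp only []
      rw [div_le_one hn0]
      exact_mod_cast h1
  have hbdd : Filter.IsBoundedUnder (· ≤ ·) Filter.atTop u :=
    Filter.isBoundedUnder_of ⟨1, hu1⟩
  have hcob : Filter.IsCoboundedUnder (· ≤ ·) Filter.atTop u :=
    Filter.isCoboundedUnder_le_of_le Filter.atTop hu0
  by_cases h3p : ∃ g : α → Fin 3, ∀ e ∈ F, (e.image g).card = 3
  · exfalso
    obtain ⟨g, hg⟩ := h3p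
    have hub : ∀ k : ℕ, 1 ≤ k → Filter.limsup u Filter.atTop ≤ 1 / (k : ℝ) := by
      intro k hk
      obtain ⟨N, hN⟩ := coPlusEx_le_div F hcard hne g hg k hk
      apply Filter.limsup_le_of_le hcob
      rw [Filter.eventually_atTop]
      refine ⟨max N 1, fun n hn => ?_⟩
      have hnN : N ≤ n := le_trans (le_max_left _ _) hn
      have hn1 : 1 ≤ n := le_trans (le_max_right _ _) hn
      have h1 := hN n hnN
      have hn0 : (0:ℝ) < n := by exact_mod_cast hn1
      have hk0 : (0:ℝ) < k := by exact_mod_cast hk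
      rw [hu]
      simp only []
      rw [div_le_div_iff₀ hn0 hk0]
      have h2 : (k : ℝ) * (coPlusEx 3 n F : ℝ) ≤ n := by exact_mod_cast h1
      linarith
    obtain ⟨k, hk⟩ := exists_nat_one_div_lt hpos
    have h2 := hub (k + 1) (by omega)
    have h3 : (1:ℝ) / ((k:ℝ) + 1) = 1 / (((k + 1 : ℕ)) : ℝ) := by push_cast; ring
    rw [h3] at hk
    linarith
  · apply Filter.le_limsup_of_le hbdd
    intro b hb
    rw [Filter.eventually_atTop] at hb
    obtain ⟨N, hN⟩ := hb
    have key : ∀ ε : ℝ, 0 < ε → 1 / 3 ≤ b + ε := by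
      intro ε hε
      obtain ⟨m, hm⟩ := exists_nat_ge (1 / ε)
      set n := max (max N 3) (m + 1) with hndef
      have hnN : N ≤ n := le_trans (le_max_left _ _) (le_max_left _ _)
      have hn3 : 3 ≤ n := le_trans (le_max_right _ _) (le_max_left _ _)
      have hnm : m + 1 ≤ n := le_max_right _ _
      have hge := coPlusEx_ge_third F h3p hn3
      have hnR : (0:ℝ) < n := by exact_mod_cast (by omega : 0 < n)
      set q : ℕ := n / 3 with hqdef
      have hq3 : (n:ℝ) - 3 ≤ 3 * (q:ℝ) := by
        have hnat : n ≤ 3 * q + 3 := by omega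
        push_cast
        exact_mod_cast (by
          have : (n:ℝ) ≤ 3 * (q:ℝ) + 3 := by exact_mod_cast hnat
          linarith : (n:ℝ) - 3 ≤ 3 * (q:ℝ))
      have hqn : 1/3 - 1/(n:ℝ) ≤ (q:ℝ) / (n:ℝ) := by
        rw [sub_le_iff_le_add, ← add_div, le_div_iff₀ hnR]
        have hnat : n ≤ 3 * q + 3 := by omega
        have hcast : (n:ℝ) ≤ 3 * (q:ℝ) + 3 := by exact_mod_cast hnat
        linarith
      have hun : (q:ℝ) / (n:ℝ) ≤ u n := by
        have hueq : u n = (coPlusEx 3 n F : ℝ) / (n:ℝ) := rfl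
        rw [hueq]
        have hcq : (q:ℝ) ≤ (coPlusEx 3 n F : ℝ) := by exact_mod_cast hge
        gcongr
      have h1n : 1/(n:ℝ) ≤ ε := by
        rw [div_le_iff₀ hnR]
        have hmn : (m:ℝ) ≤ (n:ℝ) := by exact_mod_cast (by omega : m ≤ n)
        have h1e : 1/ε ≤ (n:ℝ) := le_trans hm hmn
        calc (1:ℝ) = ε * (1/ε) := by field_simp
        _ ≤ ε * n := by
            apply mul_le_mul_of_nonneg_left h1e (le_of_lt hε)
      have hb1 := hN n hnN
      linarith
    exact le_of_forall_pos_le_add key
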